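/- Let X be a real Hilbert space and let T : X → X be an affine nonexpansive map (i.e., T x = S x + b for a continuous linear nonexpansive operator S and some b ∈ X) with F := Fix T ≠ ∅. Let (λ_n) be a sequence in [0,1] with ∑_{n∈ℕ} (1−λ_n)λ_n = +∞, let x_0 ∈ X, and define x_{n+1} := (1−λ_n)x_n + λ_n T x_n for all n. Then (x_n) converges strongly to P_F x_0, the metric projection of x_0 onto the closed affine subspace F. -/

import Mathlib

open Filter Topology

lemma km_combo_norm_sq {X : Type*} [NormedAddCommGroup X] [InnerProductSpace ℝ X] (t : ℝ) (a c : X) :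
    ‖(1 - t) • a + t • c‖^2 = (1-t)*‖a‖^2 + t*‖c‖^2 - t*(1-t)*‖a - c‖^2 := by
  have h1 := norm_add_sq_real ((1-t) • a) (t • c)
  have h2 := norm_sub_sq_real a c
  rw [norm_smul, norm_smul, real_inner_smul_left, real_inner_smul_right] at h1
  rw [h1]
  simp only [Real.norm_eq_abs, mul_pow, sq_abs]
  nlinarith [h2]

lemma km_reg {X : Type*} [NormedAddCommGroup X] [InnerProductSpace ℝ X]
    (S : X →L[ℝ] X) (hS : ∀ x : X, ‖S x‖ ≤ ‖x‖)
    (lam : ℕ → ℝ) (hlam : ∀ n, lam n ∈ Set.Icc (0 : ℝ) 1)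
    (hdiv : ¬ Summable (fun n => (1 - lam n) * lam n))
    (y : ℕ → X) (hy : ∀ n, y (n + 1) = (1 - lam n) • y n + lam n • S (y n)) :
    Tendsto (fun n => y n - S (y n)) atTop (𝓝 0) := by
  set d : ℕ → ℝ := fun n => ‖y n - S (y n)‖ with hd
  have hd0 : ∀ n, 0 ≤ d n := fun n => norm_nonneg _
  have hdn : ∀ n, d n = ‖y n - S (y n)‖ := fun n => rfl
  have hrec : ∀ n, y (n+1) - S (y (n+1)) =
      (1 - lam n) • (y n - S (y n)) + lam n • S (y n - S (y n)) := by
    intro n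
    rw [hy n]
    simp only [map_add, map_smul, map_sub]
    module
  have hmono : ∀ n, d (n+1) ≤ d n := by
    intro n
    obtain ⟨h0, h1⟩ := hlam n
    calc d (n+1) = ‖(1 - lam n) • (y n - S (y n)) + lam n • S (y n - S (y n))‖ := by
          rw [hdn, hrec n]
      _ ≤ ‖(1 - lam n) • (y n - S (y n))‖ + ‖lam n • S (y n - S (y n))‖ := norm_add_le _ _
      _ ≤ (1 - lam n) * d n + lam n * d n := by
          rw [norm_smul, norm_smul, Real.norm_eq_abs, Real.norm_eq_abs,
            abs_of_nonneg (by linarith), abs_of_nonneg h0]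
          have := hS (y n - S (y n))
          rw [hdn]
          nlinarith [hd0 n]
      _ = d n := by ring
  have hant : Antitone d := antitone_nat_of_succ_le hmono
  have hE : ∀ n, ‖y (n+1)‖^2 ≤ ‖y n‖^2 - (1 - lam n) * lam n * d n ^ 2 := by
    intro n
    obtain ⟨h0, h1⟩ := hlam n
    rw [hy n, km_combo_norm_sq, hdn]
    have h5 := hS (y n)
    have hb2 : ‖S (y n)‖^2 ≤ ‖y n‖^2 := by nlinarith [norm_nonneg (S (y n))]
    nlinarith [mul_le_mul_of_nonneg_left hb2 h0]
  have hsum : ∀ n, ∑ k ∈ Finset.range n, (1 - lam k) * lam k * d k ^ 2 ≤ ‖y 0‖^2 - ‖y n‖^2 := by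
    intro n
    induction n with
    | zero => simp
    | succ m ih =>
      rw [Finset.sum_range_succ]
      have := hE m
      linarith
  have hnn : ∀ k, 0 ≤ (1 - lam k) * lam k * d k ^ 2 := by
    intro k
    obtain ⟨h0, h1⟩ := hlam k
    exact mul_nonneg (mul_nonneg (by linarith) h0) (sq_nonneg _)
  have hsummable : Summable (fun k => (1 - lam k) * lam k * d k ^ 2) := by
    apply summable_of_sum_range_le hnn (c := ‖y 0‖^2)
    intro n
    have := hsum n
    nlinarith [norm_nonneg (y n)]
  have hbdd : BddBelow (Set.range d) := ⟨0, fun r ⟨n, hn⟩ => hn ▸ hd0 n⟩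
  have htend : Tendsto d atTop (𝓝 (⨅ n, d n)) := tendsto_atTop_ciInf hant hbdd
  have hinf0 : (⨅ n, d n) = 0 := by
    by_contra hc
    have hcpos : 0 < ⨅ n, d n := lt_of_le_of_ne (le_ciInf hd0) (Ne.symm hc)
    set c := ⨅ n, d n with hcdef
    have hle : ∀ k, (1 - lam k) * lam k ≤ (1 - lam k) * lam k * d k ^ 2 * (c^2)⁻¹ := by
      intro k
      obtain ⟨h0, h1⟩ := hlam k
      have hck : c ≤ d k := ciInf_le hbdd k
      have h3 : 0 ≤ (1 - lam k) * lam k := mul_nonneg (by linarith) h0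
      have h4 : (1:ℝ) ≤ d k ^ 2 * (c^2)⁻¹ := by
        rw [← div_eq_mul_inv, le_div_iff₀ (by positivity)]
        nlinarith
      calc (1 - lam k) * lam k = (1 - lam k) * lam k * 1 := by ring
        _ ≤ (1 - lam k) * lam k * (d k ^2 * (c^2)⁻¹) := by
            exact mul_le_mul_of_nonneg_left h4 h3
        _ = (1 - lam k) * lam k * d k ^ 2 * (c^2)⁻¹ := by ring
    have hnn2 : ∀ k, 0 ≤ (1 - lam k) * lam k := by
      intro k; obtain ⟨h0, h1⟩ := hlam k; exact mul_nonneg (by linarith) h0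
    exact hdiv (Summable.of_nonneg_of_le hnn2 hle (hsummable.mul_right (c^2)⁻¹))
  rw [hinf0] at htend
  exact tendsto_zero_iff_norm_tendsto_zero.mpr htend


/-- **Affine extension of the main result.** If `T x = S x + b` with `S` a continuous
linear nonexpansive operator, `F := Fix T` is nonempty, `(λₙ)` lies in `[0,1]` with
`∑ (1-λₙ)λₙ = +∞`, and `xₙ₊₁ = (1-λₙ)xₙ + λₙ T xₙ`, then `(xₙ)` converges strongly to
the metric projection of `x₀` onto `F`, i.e. to the (unique) point `p ∈ F` nearest to
`x₀`. -/
theorem km_affine_strong_convergence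
    {X : Type*} [NormedAddCommGroup X] [InnerProductSpace ℝ X] [CompleteSpace X]
    (T : X → X) (S : X →L[ℝ] X) (b : X)
    (hS : ∀ x : X, ‖S x‖ ≤ ‖x‖) (hTS : ∀ x : X, T x = S x + b)
    (hF : (Function.fixedPoints T).Nonempty)
    (lam : ℕ → ℝ) (hlam : ∀ n, lam n ∈ Set.Icc (0 : ℝ) 1)
    (hdiv : ¬ Summable (fun n => (1 - lam n) * lam n))
    (x : ℕ → X) (hx : ∀ n, x (n + 1) = (1 - lam n) • x n + lam n • T (x n)) :
    ∃ p ∈ Function.fixedPoints T,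
      (∀ q ∈ Function.fixedPoints T, dist (x 0) p ≤ dist (x 0) q) ∧
        Tendsto x atTop (𝓝 p) := by
  obtain ⟨p₀, hp₀⟩ := hF
  rw [Function.mem_fixedPoints] at hp₀
  have hp₀' : S p₀ + b = p₀ := by rw [← hTS]; exact hp₀
  -- the linear map L = I - S, its kernel K and range W
  set L : X →L[ℝ] X := ContinuousLinearMap.id ℝ X - S with hL
  have hLapp : ∀ z : X, L z = z - S z := fun z => rfl
  set K : Submodule ℝ X := LinearMap.ker (L : X →ₗ[ℝ] X) with hK
  have hKmem : ∀ z : X, z ∈ K ↔ S z = z := by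
    intro z
    constructor
    · intro h
      have : L z = 0 := h
      rw [hLapp] at this
      rw [← sub_eq_zero]
      rw [sub_eq_zero] at this ⊢
      exact this.symm
    · intro h
      show L z = 0
      rw [hLapp, h, sub_self]
  set W : Submodule ℝ X := LinearMap.range (L : X →ₗ[ℝ] X) with hW
  have hKclosed : IsClosed (K : Set X) := ContinuousLinearMap.isClosed_ker L
  haveI : CompleteSpace K := hKclosed.completeSpace_coe
  -- Wᗮ ≤ K
  have hWperpK : Wᗮ ≤ K := by
    intro z hz
    rw [Submodule.mem_orthogonal] at hz
    have h1 : (inner ℝ (L z) z : ℝ) = 0 := hz (L z) (LinearMap.mem_range_self _ z)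
    rw [hLapp] at h1
    rw [inner_sub_left] at h1
    have h2 : (inner ℝ (S z) z : ℝ) = ‖z‖^2 := by
      rw [← real_inner_self_eq_norm_sq]
      linarith
    rw [hKmem]
    have h3 : ‖S z - z‖^2 ≤ 0 := by
      rw [norm_sub_sq_real]
      have := hS z
      nlinarith [norm_nonneg z, norm_nonneg (S z)]
    have h4 : S z - z = 0 := by
      have := norm_nonneg (S z - z)
      have h5 : ‖S z - z‖ = 0 := by nlinarith
      exact norm_eq_zero.mp h5
    rw [← sub_eq_zero]; exact h4
  have hKperpW : Kᗮ ≤ W.topologicalClosure := by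
    have := Submodule.orthogonal_le hWperpK
    rwa [Submodule.orthogonal_orthogonal_eq_closure] at this
  -- operators A n and products P n
  set A : ℕ → X →L[ℝ] X := fun n => (1 - lam n) • ContinuousLinearMap.id ℝ X + lam n • S with hA
  have hAapp : ∀ n (z : X), A n z = (1 - lam n) • z + lam n • S z := by
    intro n z; simp [hA]
  set P : ℕ → X →L[ℝ] X :=
    fun n => Nat.rec (ContinuousLinearMap.id ℝ X) (fun k Pk => (A k).comp Pk) n with hP
  have hP0 : ∀ z : X, P 0 z = z := fun z => rfl
  have hPsucc : ∀ n (z : X), P (n+1) z = A n (P n z) := fun n z => rfl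
  have hPrec : ∀ (z : X) n, P (n+1) z = (1 - lam n) • P n z + lam n • S (P n z) := by
    intro z n; rw [hPsucc, hAapp]
  have hAnorm : ∀ n (z : X), ‖A n z‖ ≤ ‖z‖ := by
    intro n z
    obtain ⟨h0, h1⟩ := hlam n
    rw [hAapp]
    calc ‖(1 - lam n) • z + lam n • S z‖ ≤ ‖(1 - lam n) • z‖ + ‖lam n • S z‖ := norm_add_le _ _
      _ ≤ (1 - lam n) * ‖z‖ + lam n * ‖z‖ := by
          rw [norm_smul, norm_smul, Real.norm_eq_abs, Real.norm_eq_abs,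
            abs_of_nonneg (by linarith), abs_of_nonneg h0]
          have := hS z
          nlinarith [norm_nonneg z]
      _ = ‖z‖ := by ring
  have hPnorm : ∀ n (z : X), ‖P n z‖ ≤ ‖z‖ := by
    intro n
    induction n with
    | zero => intro z; rw [hP0]
    | succ m ih => intro z; rw [hPsucc]; exact le_trans (hAnorm m _) (ih z)
  have hPS : ∀ n (z : X), S (P n z) = P n (S z) := by
    intro n
    induction n with
    | zero => intro z; rw [hP0, hP0]
    | succ m ih =>
      intro z
      rw [hPsucc, hPsucc, hAapp, hAapp, map_add, map_smul, map_smul, ih z]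
  have hPfix : ∀ n (z : X), S z = z → P n z = z := by
    intro n
    induction n with
    | zero => intro z _; rw [hP0]
    | succ m ih =>
      intro z hz
      rw [hPsucc, ih z hz, hAapp, hz]
      module
  -- P n w → 0 for w in range of L
  have hWtend : ∀ w ∈ W, Tendsto (fun n => P n w) atTop (𝓝 0) := by
    rintro w ⟨z, rfl⟩
    have hreg := km_reg S hS lam hlam hdiv (fun n => P n z) (fun n => hPrec z n)
    have heq : ∀ n, P n (L z) = P n z - S (P n z) := by
      intro n
      rw [hLapp, map_sub, hPS]
    simpa [heq] using hreg
  -- P n v → 0 for v in closure of W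
  have hWctend : ∀ v ∈ W.topologicalClosure, Tendsto (fun n => P n v) atTop (𝓝 0) := by
    intro v hv
    rw [NormedAddCommGroup.tendsto_nhds_zero]
    intro ε hε
    have hv' : v ∈ closure (W : Set X) := hv
    rw [Metric.mem_closure_iff] at hv'
    obtain ⟨w, hwW, hwd⟩ := hv' (ε/2) (by linarith)
    have htw := hWtend w hwW
    rw [NormedAddCommGroup.tendsto_nhds_zero] at htw
    filter_upwards [htw (ε/2) (by linarith)] with n hn
    have : P n v = P n (v - w) + P n w := by rw [map_sub]; abel
    rw [this]
    calc ‖P n (v - w) + P n w‖ ≤ ‖P n (v - w)‖ + ‖P n w‖ := norm_add_le _ _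
      _ ≤ ‖v - w‖ + ‖P n w‖ := by linarith [hPnorm n (v - w)]
      _ < ε/2 + ε/2 := by
          rw [dist_eq_norm] at hwd
          exact add_lt_add (by linarith) hn
      _ = ε := by ring
  -- the sequence y
  set y : ℕ → X := fun n => x n - p₀ with hy
  have hyrec : ∀ n, y (n+1) = (1 - lam n) • y n + lam n • S (y n) := by
    intro n
    simp only [hy]
    rw [hx n, hTS, map_sub]
    have : S p₀ = p₀ - b := eq_sub_of_add_eq hp₀'
    rw [this]
    module
  have hyP : ∀ n, y n = P n (y 0) := by
    intro n
    induction n with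
    | zero => rw [hP0]
    | succ m ih => rw [hyrec, ih, ← hPrec]
  -- projection decomposition
  set u : X := (K.orthogonalProjection (y 0) : X) with hu
  have huK : u ∈ K := SetLike.coe_mem _
  have huS : S u = u := (hKmem u).mp huK
  set v : X := y 0 - u with hv
  have hvperp : v ∈ Kᗮ := Submodule.sub_starProjection_mem_orthogonal (K := K) (y 0)
  have hytend : Tendsto y atTop (𝓝 u) := by
    have hdecomp : ∀ n, y n = u + P n v := by
      intro n
      rw [hyP n]
      have : y 0 = u + v := by rw [hv]; abel
      rw [this, map_add, hPfix n u huS]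
    rw [show y = fun n => u + P n v from funext hdecomp]
    have := (hWctend v (hKperpW hvperp)).const_add u
    simpa using this
  set p : X := p₀ + u with hp
  have hxtend : Tendsto x atTop (𝓝 p) := by
    have h := hytend.add_const p₀
    have h2 : Tendsto x atTop (𝓝 (u + p₀)) := by
      refine h.congr fun n => ?_
      simp [hy]
    rw [show p = u + p₀ from by rw [hp, add_comm]]
    exact h2
  have hpfix : T p = p := by
    rw [hTS, hp, map_add, huS]
    rw [show S p₀ = p₀ - b from eq_sub_of_add_eq hp₀']
    abel
  refine ⟨p, Function.mem_fixedPoints.mpr hpfix, ?_, hxtend⟩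
  intro q hq
  rw [Function.mem_fixedPoints] at hq
  have hqS : S q = q - b := by
    have h := hTS q
    rw [hq] at h
    exact eq_sub_of_add_eq h.symm
  have hpS : S p = p - b := by
    have h := hTS p
    rw [hpfix] at h
    exact eq_sub_of_add_eq h.symm
  have hpq : q - p ∈ K := by
    rw [hKmem, map_sub, hqS, hpS]
    abel
  have hinner : (inner ℝ (q - p) v : ℝ) = 0 :=
    (Submodule.mem_orthogonal K v).mp hvperp (q - p) hpq
  have hx0p : x 0 - p = v := by rw [hp, hv, hy]; beta_reduce; abel
  have hx0q : x 0 - q = v + (p - q) := by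
    rw [← hx0p]; abel
  rw [dist_eq_norm, dist_eq_norm, hx0p, hx0q]
  have hn := norm_add_sq_real v (p - q)
  have hi : (inner ℝ v (p - q) : ℝ) = 0 := by
    have h1 : (inner ℝ v (q - p) : ℝ) = 0 := by rw [real_inner_comm]; exact hinner
    have : p - q = -(q - p) := by abel
    rw [this, inner_neg_right, h1, neg_zero]
  rw [hi] at hn
  nlinarith [norm_nonneg v, norm_nonneg (v + (p - q)), norm_nonneg (p - q)]
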